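/- arXiv:2305.06541 — 4 statements merged into one kernel-verified Lean document; each statement's English description precedes it below -/
import Mathlib

section
/- Let ρ, v, u, v̄, ū be as follows: ρ : ℝᵈ → ℝ≥0 integrable with ∫ρ > 0, u an indicator function, v measurable with ‖v-u‖_∞ ≤ 1, all relevant weighted integrals finite. Then ∫ ρ (v - v̄)² ≥ (1/4) ∫ ρ |u - ū| - ∫ ρ |v - u|. -/
open MeasureTheory

set_option maxHeartbeats 1000000 in
theorem stmt_4 (d : ℕ) (ρ v : EuclideanSpace ℝ (Fin d) → ℝ)
    (A : Set (EuclideanSpace ℝ (Fin d))) (hA : MeasurableSet A)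
    (u : EuclideanSpace ℝ (Fin d) → ℝ) (hu : u = A.indicator (fun _ => (1 : ℝ)))
    (hρ : ∀ x, 0 ≤ ρ x) (hρi : Integrable ρ) (hpos : 0 < ∫ x, ρ x)
    (hv : Measurable v) (hvu : ∀ x, |v x - u x| ≤ 1)
    (hρv : Integrable (fun x => ρ x * v x))
    (hρv2 : Integrable (fun x => ρ x * v x ^ 2))
    (vbar ubar : ℝ)
    (hvbar : vbar = (∫ x, ρ x * v x) / (∫ x, ρ x))
    (hubar : ubar = (∫ x, ρ x * u x) / (∫ x, ρ x)) :
    (1 / 4) * (∫ x, ρ x * |u x - ubar|) - (∫ x, ρ x * |v x - u x|) ≤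
      ∫ x, ρ x * (v x - vbar) ^ 2 := by
  set M : ℝ := ∫ x, ρ x with hM
  set Iu : ℝ := ∫ x, ρ x * u x with hIu
  set Iv : ℝ := ∫ x, ρ x * v x with hIv
  have hu' : ∀ x, u x = 0 ∨ u x = 1 := by
    intro x; rw [hu]; by_cases hx : x ∈ A
    · right; simp [hx]
    · left; simp [hx]
  have hsq : ∀ x, u x ^ 2 = u x := by
    intro x; rcases hu' x with h | h <;> simp [h]
  have humeas : Measurable u := by
    rw [hu]; exact measurable_const.indicator hA
  have hIu_int : Integrable (fun x => ρ x * u x) := by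
    have : (fun x => ρ x * u x) = A.indicator ρ := by
      funext x; rw [hu]; by_cases hx : x ∈ A <;> simp [hx]
    rw [this]; exact hρi.indicator hA
  have hIu_nonneg : 0 ≤ Iu :=
    integral_nonneg fun x => mul_nonneg (hρ x) (by rcases hu' x with h | h <;> simp [h])
  have hIu_le : Iu ≤ M := by
    refine integral_mono hIu_int hρi fun x => ?_
    rcases hu' x with h | h <;> simp [h, hρ x]
  have hMne : M ≠ 0 := ne_of_gt hpos
  have hubar' : Iu = ubar * M := by rw [hubar]; field_simp
  have hvbar' : Iv = vbar * M := by rw [hvbar]; field_simp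
  have hub0 : 0 ≤ ubar := by rw [hubar]; exact div_nonneg hIu_nonneg hpos.le
  have hub1 : ubar ≤ 1 := by rw [hubar, div_le_one hpos]; exact hIu_le
  -- pointwise identities for the indicator
  have habs : ∀ x, |u x - ubar| = u x - 2 * u x * ubar + ubar := by
    intro x; rcases hu' x with h | h <;> rw [h]
    · rw [abs_of_nonpos (by linarith)]; ring
    · rw [abs_of_nonneg (by linarith)]; ring
  -- integrability bundle
  have huv_int : Integrable (fun x => u x * (ρ x * v x)) := by
    refine hρv.bdd_mul (c := 1) humeas.aestronglyMeasurable (Filter.Eventually.of_forall fun x => ?_)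
    rcases hu' x with h | h <;> simp [h]
  have hρw2_fun : (fun x => ρ x * (v x - u x) ^ 2) =
      fun x => ρ x * v x ^ 2 - 2 * (u x * (ρ x * v x)) + ρ x * u x := by
    funext x
    have h2 := hsq x
    linear_combination ρ x * h2
  have hρw2 : Integrable (fun x => ρ x * (v x - u x) ^ 2) := by
    rw [hρw2_fun]; exact (hρv2.sub (huv_int.const_mul 2)).add hIu_int
  have hρw : Integrable (fun x => ρ x * (v x - u x)) := by
    have : (fun x => ρ x * (v x - u x)) = fun x => ρ x * v x - ρ x * u x := by
      funext x; ring
    rw [this]; exact hρv.sub hIu_int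
  have hJw_int : Integrable (fun x => ρ x * |v x - u x|) := by
    have : (fun x => ρ x * |v x - u x|) = fun x => |v x - u x| * ρ x := by
      funext x; ring
    rw [this]
    exact hρi.bdd_mul ((hv.sub humeas).abs).aestronglyMeasurable
      (c := 1) (Filter.Eventually.of_forall fun x => by simpa [abs_abs] using hvu x)
  -- compute Ju := ∫ ρ |u - ubar|
  have h1 : Integrable (fun x => ρ x * u x - 2 * ubar * (ρ x * u x)) :=
    hIu_int.sub (hIu_int.const_mul _)
  have hJu : (∫ x, ρ x * |u x - ubar|) = Iu - 2 * ubar * Iu + ubar * M := by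
    have hfun : (fun x => ρ x * |u x - ubar|) =
        fun x => ρ x * u x - 2 * ubar * (ρ x * u x) + ubar * ρ x := by
      funext x; rw [habs x]; ring
    rw [hfun, integral_add h1 (hρi.const_mul ubar),
      integral_sub hIu_int (hIu_int.const_mul _), integral_const_mul, integral_const_mul]
  -- compute B2 := ∫ ρ (u - ubar)^2
  have hB_fun : (fun x => ρ x * (u x - ubar) ^ 2) =
      fun x => ρ x * u x - 2 * ubar * (ρ x * u x) + ubar ^ 2 * ρ x := by
    funext x
    linear_combination ρ x * hsq x
  have hB2_int : Integrable (fun x => ρ x * (u x - ubar) ^ 2) := by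
    rw [hB_fun]; exact h1.add (hρi.const_mul _)
  have hB2 : (∫ x, ρ x * (u x - ubar) ^ 2) = Iu - 2 * ubar * Iu + ubar ^ 2 * M := by
    rw [hB_fun, integral_add h1 (hρi.const_mul (ubar ^ 2)),
      integral_sub hIu_int (hIu_int.const_mul _), integral_const_mul, integral_const_mul]
  -- A2 integrable
  have hA2_fun : (fun x => ρ x * (v x - vbar) ^ 2) =
      fun x => ρ x * v x ^ 2 - 2 * vbar * (ρ x * v x) + vbar ^ 2 * ρ x := by
    funext x; ring
  have hA2_int : Integrable (fun x => ρ x * (v x - vbar) ^ 2) := by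
    rw [hA2_fun]; exact ((hρv2.sub (hρv.const_mul _)).add (hρi.const_mul _))
  -- C2 := ∫ ρ ((v-u) - (vbar-ubar))^2
  have hC_fun : (fun x => ρ x * ((v x - u x) - (vbar - ubar)) ^ 2) =
      fun x => ρ x * (v x - u x) ^ 2 - 2 * (vbar - ubar) * (ρ x * (v x - u x))
        + (vbar - ubar) ^ 2 * ρ x := by
    funext x; ring
  have h2i : Integrable (fun x => ρ x * (v x - u x) ^ 2
      - 2 * (vbar - ubar) * (ρ x * (v x - u x))) := hρw2.sub (hρw.const_mul _)
  have hC2_int : Integrable (fun x => ρ x * ((v x - u x) - (vbar - ubar)) ^ 2) := by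
    rw [hC_fun]; exact h2i.add (hρi.const_mul _)
  have hIw : (∫ x, ρ x * (v x - u x)) = Iv - Iu := by
    have : (fun x => ρ x * (v x - u x)) = fun x => ρ x * v x - ρ x * u x := by
      funext x; ring
    rw [this, integral_sub hρv hIu_int]
  have hC2 : (∫ x, ρ x * ((v x - u x) - (vbar - ubar)) ^ 2) =
      (∫ x, ρ x * (v x - u x) ^ 2) - 2 * (vbar - ubar) * (Iv - Iu)
        + (vbar - ubar) ^ 2 * M := by
    rw [hC_fun, integral_add h2i (hρi.const_mul ((vbar - ubar) ^ 2)),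
      integral_sub hρw2 (hρw.const_mul _), integral_const_mul, integral_const_mul, hIw]
  -- step: B2 ≤ 2 A2 + 2 C2 (pointwise (a-b)^2 ≤ 2a^2+2b^2)
  have hBle : (∫ x, ρ x * (u x - ubar) ^ 2) ≤
      ∫ x, (2 * (ρ x * (v x - vbar) ^ 2) + 2 * (ρ x * ((v x - u x) - (vbar - ubar)) ^ 2)) := by
    refine integral_mono hB2_int ((hA2_int.const_mul 2).add (hC2_int.const_mul 2)) fun x => ?_
    have key : (u x - ubar) ^ 2 ≤
        2 * (v x - vbar) ^ 2 + 2 * ((v x - u x) - (vbar - ubar)) ^ 2 := by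
      nlinarith [sq_nonneg ((v x - vbar) + ((v x - u x) - (vbar - ubar)))]
    refine le_trans (mul_le_mul_of_nonneg_left key (hρ x)) (le_of_eq (by ring))
  have hBle' : (∫ x, ρ x * (u x - ubar) ^ 2) ≤
      2 * (∫ x, ρ x * (v x - vbar) ^ 2) +
      2 * (∫ x, ρ x * ((v x - u x) - (vbar - ubar)) ^ 2) := by
    rwa [integral_add (hA2_int.const_mul 2) (hC2_int.const_mul 2),
      integral_const_mul, integral_const_mul] at hBle
  -- step: ∫ ρ w^2 ≤ ∫ ρ |w|
  have hW2le : (∫ x, ρ x * (v x - u x) ^ 2) ≤ ∫ x, ρ x * |v x - u x| := by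
    refine integral_mono hρw2 hJw_int fun x => ?_
    have h2 : (v x - u x) ^ 2 ≤ |v x - u x| := by
      nlinarith [abs_nonneg (v x - u x), sq_abs (v x - u x), hvu x]
    exact mul_le_mul_of_nonneg_left h2 (hρ x)
  -- assemble
  have hJu2B : (∫ x, ρ x * |u x - ubar|) = 2 * (∫ x, ρ x * (u x - ubar) ^ 2) := by
    rw [hJu, hB2]
    linear_combination (2 * ubar - 1) * hubar'
  have hd : Iv - Iu = (vbar - ubar) * M := by rw [hubar', hvbar']; ring
  have hC2le : (∫ x, ρ x * ((v x - u x) - (vbar - ubar)) ^ 2) ≤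
      ∫ x, ρ x * (v x - u x) ^ 2 := by
    rw [hC2, hd]
    nlinarith [mul_nonneg (sq_nonneg (vbar - ubar)) hpos.le]
  linarith [hJu2B, hBle', hW2le, hC2le]
end

section
/- Let R : ℝᵈ → ℝ≥0 be L-Lipschitz and C¹, let θ > 0 with θL < 1, let φ : ℝᵈ → ℝ≥0 be a measurable mollifier supported in the closed unit ball with ∫φ = 1, and let f : ℝᵈ → ℝ≥0 be integrable. Define f_θ(x) = ∫ f(x - θR(x)y) φ(y) dy. Then (1/(1+θL)) ∫ f ≤ ∫ f_θ ≤ (1/(1-θL)) ∫ f. -/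
open MeasureTheory Set
open scoped ENNReal NNReal

lemma det_id_sub_smulRight {E : Type*} [NormedAddCommGroup E] [NormedSpace ℝ E]
    [FiniteDimensional ℝ E] (c : E →L[ℝ] ℝ) (y : E) :
    (ContinuousLinearMap.id ℝ E - c.smulRight y).det = 1 - c y := by
  classical
  rw [ContinuousLinearMap.det]
  have hco : ((ContinuousLinearMap.id ℝ E - c.smulRight y : E →L[ℝ] E) : E →ₗ[ℝ] E)
      = LinearMap.id - ((c : E →ₗ[ℝ] ℝ).smulRight y) := rfl
  rw [hco]
  let b : Module.Basis (Fin (Module.finrank ℝ E)) ℝ E := Module.finBasis ℝ E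
  rw [← LinearMap.det_toMatrix b]
  have hM : LinearMap.toMatrix b b (LinearMap.id - (c : E →ₗ[ℝ] ℝ).smulRight y)
      = 1 - Matrix.replicateCol Unit (fun i => b.repr y i) * Matrix.replicateRow Unit (fun j => c (b j)) := by
    ext i j
    simp [LinearMap.toMatrix_apply, Matrix.one_apply, Matrix.mul_apply, LinearMap.smulRight_apply,
      Matrix.replicateCol_apply, Matrix.replicateRow_apply, _root_.map_smul, Finsupp.single_apply, mul_comm, eq_comm]
  rw [hM, Matrix.det_one_sub_mul_comm, Matrix.det_unique]
  have : (Matrix.replicateRow Unit (fun j => c (b j)) * Matrix.replicateCol Unit (fun i => b.repr y i)) default default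
      = c y := by
    simp [Matrix.mul_apply, Matrix.replicateRow_apply, Matrix.replicateCol_apply]
    conv_rhs => rw [← b.sum_repr y]
    rw [map_sum]
    simp [mul_comm]
  simp [Matrix.sub_apply, Matrix.one_apply, this]

lemma core_bound (d : ℕ) (R : EuclideanSpace ℝ (Fin d) → ℝ) (L θ : ℝ) (hL : 0 ≤ L)
    (hRlip : LipschitzWith (Real.toNNReal L) R) (hRC1 : ContDiff ℝ 1 R)
    (hθ : 0 < θ) (hθL : θ * L < 1)
    (f : EuclideanSpace ℝ (Fin d) → ℝ) (hfnn : ∀ x, 0 ≤ f x)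
    (y : EuclideanSpace ℝ (Fin d)) (hy : ‖y‖ ≤ 1) :
    ENNReal.ofReal (1 - θ*L) * (∫⁻ x, ENNReal.ofReal (f (x - (θ * R x) • y)))
        ≤ (∫⁻ x, ENNReal.ofReal (f x)) ∧
    (∫⁻ x, ENNReal.ofReal (f x))
        ≤ ENNReal.ofReal (1 + θ*L) * ∫⁻ x, ENNReal.ofReal (f (x - (θ * R x) • y)) := by
  have hθL0 : 0 ≤ θ * L := mul_nonneg hθ.le hL
  have hRd : Differentiable ℝ R := hRC1.differentiable one_ne_zero
  set A : EuclideanSpace ℝ (Fin d) → (EuclideanSpace ℝ (Fin d) →L[ℝ] EuclideanSpace ℝ (Fin d)) :=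
    fun x => ContinuousLinearMap.id ℝ (EuclideanSpace ℝ (Fin d)) - ((θ • fderiv ℝ R x).smulRight y) with hA
  have hg' : ∀ x, HasFDerivAt (fun x : EuclideanSpace ℝ (Fin d) => x - (θ * R x) • y) (A x) x := by
    intro x
    have h1 : HasFDerivAt (fun x : EuclideanSpace ℝ (Fin d) => θ * R x) (θ • fderiv ℝ R x) x :=
      ((hRd x).hasFDerivAt).const_mul θ
    have h2 := h1.smul (hasFDerivAt_const y x)
    refine ((hasFDerivAt_id x).sub h2).congr_fderiv ?_
    simp [hA]
  have hDb : ∀ x, |θ * fderiv ℝ R x y| ≤ θ * L := by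
    intro x
    rw [abs_mul, abs_of_pos hθ]
    refine mul_le_mul_of_nonneg_left ?_ hθ.le
    calc |fderiv ℝ R x y| = ‖fderiv ℝ R x y‖ := rfl
      _ ≤ ‖fderiv ℝ R x‖ * ‖y‖ := (fderiv ℝ R x).le_opNorm y
      _ ≤ L * 1 := by
          refine mul_le_mul ?_ hy (norm_nonneg _) hL
          have := norm_fderiv_le_of_lipschitz ℝ hRlip (x₀ := x)
          rwa [Real.coe_toNNReal L hL] at this
      _ = L := mul_one L
  have hdet : ∀ x, (A x).det = 1 - θ * (fderiv ℝ R x y) := by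
    intro x
    rw [hA, det_id_sub_smulRight]
    simp
  have hdet_lb : ∀ x, 1 - θ*L ≤ |(A x).det| := by
    intro x
    have h := abs_le.1 (hDb x)
    rw [hdet x, abs_of_pos (by linarith)]
    linarith [h.2]
  have hdet_ub : ∀ x, |(A x).det| ≤ 1 + θ*L := by
    intro x
    have h := abs_le.1 (hDb x)
    rw [hdet x, abs_of_pos (by linarith)]
    linarith [h.1]
  have happrox : ApproximatesLinearOn (fun x : EuclideanSpace ℝ (Fin d) => x - (θ * R x) • y)
      ((ContinuousLinearEquiv.refl ℝ (EuclideanSpace ℝ (Fin d)) : EuclideanSpace ℝ (Fin d) ≃L[ℝ] EuclideanSpace ℝ (Fin d)) : EuclideanSpace ℝ (Fin d) →L[ℝ] EuclideanSpace ℝ (Fin d)) univ ((θ*L).toNNReal) := by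
    intro x _ x' _
    have heq : (fun x : EuclideanSpace ℝ (Fin d) => x - (θ * R x) • y) x - (fun x : EuclideanSpace ℝ (Fin d) => x - (θ * R x) • y) x'
        - ((ContinuousLinearEquiv.refl ℝ (EuclideanSpace ℝ (Fin d)) : EuclideanSpace ℝ (Fin d) ≃L[ℝ] EuclideanSpace ℝ (Fin d)) : EuclideanSpace ℝ (Fin d) →L[ℝ] EuclideanSpace ℝ (Fin d)) (x - x')
        = (θ * R x' - θ * R x) • y := by
      simp only [ContinuousLinearEquiv.coe_coe, ContinuousLinearEquiv.coe_refl',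
        id_eq, sub_smul]
      abel
    rw [heq, norm_smul]
    have h1 : ‖θ * R x' - θ * R x‖ ≤ θ * L * ‖x - x'‖ := by
      rw [← mul_sub, norm_mul, Real.norm_eq_abs, Real.norm_eq_abs, abs_of_pos hθ, mul_assoc]
      refine mul_le_mul_of_nonneg_left ?_ hθ.le
      have := hRlip.dist_le_mul x' x
      rw [Real.dist_eq, dist_eq_norm, Real.coe_toNNReal L hL] at this
      calc |R x' - R x| ≤ L * ‖x' - x‖ := this
        _ = L * ‖x - x'‖ := by rw [norm_sub_rev]
    calc ‖θ * R x' - θ * R x‖ * ‖y‖ ≤ (θ * L * ‖x - x'‖) * 1 :=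
          mul_le_mul h1 hy (norm_nonneg _) (by positivity)
      _ = ((θ*L).toNNReal : ℝ) * ‖x - x'‖ := by
          rw [Real.coe_toNNReal _ hθL0]; ring
  have hc : Subsingleton (EuclideanSpace ℝ (Fin d)) ∨ ((θ*L).toNNReal : NNReal) <
      ‖(((ContinuousLinearEquiv.refl ℝ (EuclideanSpace ℝ (Fin d)) : EuclideanSpace ℝ (Fin d) ≃L[ℝ] EuclideanSpace ℝ (Fin d)).symm : EuclideanSpace ℝ (Fin d) ≃L[ℝ] EuclideanSpace ℝ (Fin d)) : EuclideanSpace ℝ (Fin d) →L[ℝ] EuclideanSpace ℝ (Fin d))‖₊⁻¹ := by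
    rcases subsingleton_or_nontrivial (EuclideanSpace ℝ (Fin d)) with h | h
    · exact Or.inl h
    · right
      have h2 : (((ContinuousLinearEquiv.refl ℝ (EuclideanSpace ℝ (Fin d)) : EuclideanSpace ℝ (Fin d) ≃L[ℝ] EuclideanSpace ℝ (Fin d)).symm : EuclideanSpace ℝ (Fin d) ≃L[ℝ] EuclideanSpace ℝ (Fin d)) : EuclideanSpace ℝ (Fin d) →L[ℝ] EuclideanSpace ℝ (Fin d))
          = ContinuousLinearMap.id ℝ (EuclideanSpace ℝ (Fin d)) := rfl
      rw [h2, ContinuousLinearMap.nnnorm_id, inv_one, ← Real.toNNReal_one]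
      exact (Real.toNNReal_lt_toNNReal_iff one_pos).2 hθL
  have hsurj : Function.Surjective (fun x : EuclideanSpace ℝ (Fin d) => x - (θ * R x) • y) := happrox.surjective hc
  have hinj : InjOn (fun x : EuclideanSpace ℝ (Fin d) => x - (θ * R x) • y) univ := happrox.injOn hc
  have himg : (fun x : EuclideanSpace ℝ (Fin d) => x - (θ * R x) • y) '' univ = univ := by
    rw [image_univ, hsurj.range_eq]
  have key := lintegral_image_eq_lintegral_abs_det_fderiv_mul (volume : Measure (EuclideanSpace ℝ (Fin d)))
      MeasurableSet.univ (fun x _ => (hg' x).hasFDerivWithinAt) hinj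
      (fun z => ENNReal.ofReal (f z))
  rw [himg, Measure.restrict_univ] at key
  constructor
  · calc ENNReal.ofReal (1 - θ*L) * ∫⁻ x, ENNReal.ofReal (f (x - (θ * R x) • y))
        = ∫⁻ x, ENNReal.ofReal (1 - θ*L) * ENNReal.ofReal (f (x - (θ * R x) • y)) :=
          (lintegral_const_mul' _ _ ENNReal.ofReal_ne_top).symm
      _ ≤ ∫⁻ x, ENNReal.ofReal |(A x).det| * ENNReal.ofReal (f (x - (θ * R x) • y)) :=
          lintegral_mono fun x => mul_le_mul_left (ENNReal.ofReal_le_ofReal (hdet_lb x)) _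
      _ = ∫⁻ x, ENNReal.ofReal (f x) := key.symm
  · calc (∫⁻ x, ENNReal.ofReal (f x))
        = ∫⁻ x, ENNReal.ofReal |(A x).det| * ENNReal.ofReal (f (x - (θ * R x) • y)) := key
      _ ≤ ∫⁻ x, ENNReal.ofReal (1 + θ*L) * ENNReal.ofReal (f (x - (θ * R x) • y)) :=
          lintegral_mono fun x => mul_le_mul_left (ENNReal.ofReal_le_ofReal (hdet_ub x)) _
      _ = ENNReal.ofReal (1 + θ*L) * ∫⁻ x, ENNReal.ofReal (f (x - (θ * R x) • y)) :=
          lintegral_const_mul' _ _ ENNReal.ofReal_ne_top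

theorem stmt_8 (d : ℕ) (R : EuclideanSpace ℝ (Fin d) → ℝ) (L θ : ℝ) (hL : 0 ≤ L)
    (hRnn : ∀ x, 0 ≤ R x) (hRlip : LipschitzWith (Real.toNNReal L) R)
    (hRC1 : ContDiff ℝ 1 R)
    (hθ : 0 < θ) (hθL : θ * L < 1)
    (φ : EuclideanSpace ℝ (Fin d) → ℝ) (hφnn : ∀ y, 0 ≤ φ y)
    (hφsupp : Function.support φ ⊆ Metric.closedBall 0 1)
    (hφi : Integrable φ) (hφ1 : (∫ y, φ y) = 1)
    (f : EuclideanSpace ℝ (Fin d) → ℝ) (hfnn : ∀ x, 0 ≤ f x)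
    (hfi : Integrable f) (hfm : Measurable f) :
    (1 / (1 + θ * L)) * (∫ x, f x) ≤ (∫ x, ∫ y, f (x - (θ * R x) • y) * φ y) ∧
    (∫ x, ∫ y, f (x - (θ * R x) • y) * φ y) ≤ (1 / (1 - θ * L)) * ∫ x, f x := by
  classical
  have hθL0 : 0 ≤ θ * L := mul_nonneg hθ.le hL
  have h1a : (0:ℝ) < 1 - θ * L := by linarith
  have h1b : (0:ℝ) < 1 + θ * L := by linarith
  obtain ⟨ψ, hψm, hψe⟩ : ∃ ψ : EuclideanSpace ℝ (Fin d) → ℝ,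
      Measurable ψ ∧ φ =ᵐ[volume] ψ :=
    ⟨hφi.1.mk φ, hφi.1.stronglyMeasurable_mk.measurable, hφi.1.ae_eq_mk⟩
  have hmapc : Continuous fun p : EuclideanSpace ℝ (Fin d) × EuclideanSpace ℝ (Fin d) =>
      p.1 - (θ * R p.1) • p.2 := by
    have hRc : Continuous R := hRC1.continuous
    fun_prop
  have hHmeas : Measurable fun p : EuclideanSpace ℝ (Fin d) × EuclideanSpace ℝ (Fin d) =>
      ENNReal.ofReal (f (p.1 - (θ * R p.1) • p.2) * ψ p.2) :=
    ENNReal.measurable_ofReal.comp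
      ((hfm.comp hmapc.measurable).mul (hψm.comp measurable_snd))
  set I : ℝ≥0∞ := ∫⁻ x, ENNReal.ofReal (f x) with hIdef
  have hI : I = ENNReal.ofReal (∫ x, f x) :=
    (ofReal_integral_eq_lintegral_ofReal hfi (Filter.Eventually.of_forall hfnn)).symm
  have hIne : I ≠ ⊤ := by rw [hI]; exact ENNReal.ofReal_ne_top
  set a : ℝ≥0∞ := ENNReal.ofReal (1 - θ * L) with hadef
  set b : ℝ≥0∞ := ENNReal.ofReal (1 + θ * L) with hbdef
  have ha0 : a ≠ 0 := (ENNReal.ofReal_pos.2 h1a).ne'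
  have hb0 : b ≠ 0 := (ENNReal.ofReal_pos.2 h1b).ne'
  have haT : a ≠ ⊤ := ENNReal.ofReal_ne_top
  have hbT : b ≠ ⊤ := ENNReal.ofReal_ne_top
  have hIa_ne : I / a ≠ ⊤ := (ENNReal.div_lt_top hIne ha0).ne
  have hIb_ne : I / b ≠ ⊤ := (ENNReal.div_lt_top hIne hb0).ne
  have hψnn : ∀ᵐ y : EuclideanSpace ℝ (Fin d), 0 ≤ ψ y :=
    hψe.mono fun y h => h ▸ hφnn y
  -- pointwise (in y) bounds
  have hTb : ∀ᵐ y : EuclideanSpace ℝ (Fin d),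
      (∫⁻ x, ENNReal.ofReal (f (x - (θ * R x) • y) * ψ y)) ≤ (I / a) * ENNReal.ofReal (ψ y)
      ∧ (I / b) * ENNReal.ofReal (ψ y)
        ≤ ∫⁻ x, ENNReal.ofReal (f (x - (θ * R x) • y) * ψ y) := by
    filter_upwards [hψe] with y hy
    have hin : (∫⁻ x, ENNReal.ofReal (f (x - (θ * R x) • y) * ψ y))
        = (∫⁻ x, ENNReal.ofReal (f (x - (θ * R x) • y))) * ENNReal.ofReal (ψ y) := by
      rw [← lintegral_mul_const' _ _ ENNReal.ofReal_ne_top]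
      congr 1
      funext x
      rw [ENNReal.ofReal_mul (hfnn _)]
    by_cases hyφ : φ y = 0
    · rw [hin, ← hy, hyφ]; simp
    · have hy1 : ‖y‖ ≤ 1 := by
        have := hφsupp (by simpa [Function.mem_support] using hyφ)
        simpa [Metric.mem_closedBall, dist_zero_right] using this
      obtain ⟨hlb, hub⟩ := core_bound d R L θ hL hRlip hRC1 hθ hθL f hfnn y hy1
      rw [← hIdef] at hlb hub
      constructor
      · rw [hin]
        refine mul_le_mul_left ?_ _
        exact (ENNReal.le_div_iff_mul_le (Or.inl ha0) (Or.inl haT)).2 (by rwa [mul_comm])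
      · rw [hin]
        refine mul_le_mul_left ?_ _
        exact ENNReal.div_le_of_le_mul (by rwa [mul_comm] at hub)
  have hψ1 : (∫⁻ y, ENNReal.ofReal (ψ y)) = 1 := by
    have h1 : (∫⁻ y, ENNReal.ofReal (ψ y)) = ∫⁻ y, ENNReal.ofReal (φ y) :=
      lintegral_congr_ae (hψe.mono fun y h => by simp only [h])
    rw [h1, ← ofReal_integral_eq_lintegral_ofReal hφi (Filter.Eventually.of_forall hφnn),
      hφ1, ENNReal.ofReal_one]
  set J : ℝ≥0∞ := ∫⁻ y, ∫⁻ x, ENNReal.ofReal (f (x - (θ * R x) • y) * ψ y) with hJdef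
  have hJu : J ≤ I / a := by
    calc J ≤ ∫⁻ y, (I / a) * ENNReal.ofReal (ψ y) :=
          lintegral_mono_ae (hTb.mono fun y h => h.1)
      _ = (I / a) * 1 := by rw [lintegral_const_mul' _ _ hIa_ne, hψ1]
      _ = I / a := mul_one _
  have hJl : I / b ≤ J := by
    calc I / b = (I / b) * 1 := (mul_one _).symm
      _ = ∫⁻ y, (I / b) * ENNReal.ofReal (ψ y) := by
          rw [lintegral_const_mul' _ _ hIb_ne, hψ1]
      _ ≤ J := lintegral_mono_ae (hTb.mono fun y h => h.2)
  have hswap : (∫⁻ x, ∫⁻ y, ENNReal.ofReal (f (x - (θ * R x) • y) * ψ y)) = J :=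
    lintegral_lintegral_swap hHmeas.aemeasurable
  have hJne : J ≠ ⊤ := (lt_of_le_of_lt hJu (ENNReal.div_lt_top hIne ha0)).ne
  -- Bochner side
  have hBint : ∀ x : EuclideanSpace ℝ (Fin d),
      (∫ y, f (x - (θ * R x) • y) * φ y) = ∫ y, f (x - (θ * R x) • y) * ψ y := fun x =>
    integral_congr_ae (hψe.mono fun y h => by simp only [h])
  have hBx : ∀ x : EuclideanSpace ℝ (Fin d), (∫ y, f (x - (θ * R x) • y) * ψ y)
      = (∫⁻ y, ENNReal.ofReal (f (x - (θ * R x) • y) * ψ y)).toReal := by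
    intro x
    refine integral_eq_lintegral_of_nonneg_ae ?_ ?_
    · exact hψnn.mono fun y h => mul_nonneg (hfnn _) h
    · apply Measurable.aestronglyMeasurable
      have hc : Continuous fun y : EuclideanSpace ℝ (Fin d) => x - (θ * R x) • y := by
        fun_prop
      exact (hfm.comp hc.measurable).mul hψm
  have hℓmeas : Measurable fun x : EuclideanSpace ℝ (Fin d) =>
      ∫⁻ y, ENNReal.ofReal (f (x - (θ * R x) • y) * ψ y) :=
    hHmeas.lintegral_prod_right'
  have hae_lt : ∀ᵐ x : EuclideanSpace ℝ (Fin d),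
      (∫⁻ y, ENNReal.ofReal (f (x - (θ * R x) • y) * ψ y)) < ⊤ :=
    ae_lt_top hℓmeas (hswap ▸ hJne)
  have hB : (∫ x, ∫ y, f (x - (θ * R x) • y) * φ y) = J.toReal := by
    simp_rw [hBint, hBx]
    rw [integral_eq_lintegral_of_nonneg_ae
      (Filter.Eventually.of_forall fun x => ENNReal.toReal_nonneg)
      (ENNReal.measurable_toReal.comp hℓmeas).aestronglyMeasurable]
    rw [← hswap]
    congr 1
    apply lintegral_congr_ae
    filter_upwards [hae_lt] with x hx
    rw [ENNReal.ofReal_toReal hx.ne]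
  rw [hB]
  have hfint_nn : 0 ≤ ∫ x, f x := integral_nonneg hfnn
  constructor
  · have heq : ((1:ℝ) / (1 + θ * L)) * ∫ x, f x = (I / b).toReal := by
      rw [ENNReal.toReal_div, hI, ENNReal.toReal_ofReal hfint_nn, hbdef,
        ENNReal.toReal_ofReal h1b.le]
      ring
    rw [heq]
    exact ENNReal.toReal_mono hJne hJl
  · have heq : ((1:ℝ) / (1 - θ * L)) * ∫ x, f x = (I / a).toReal := by
      rw [ENNReal.toReal_div, hI, ENNReal.toReal_ofReal hfint_nn, hadef,
        ENNReal.toReal_ofReal h1a.le]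
      ring
    rw [heq]
    exact ENNReal.toReal_mono hIa_ne hJu
end

section
/- Let R : ℝᵈ → ℝ≥0 be L-Lipschitz and C¹, let φ be a C¹ mollifier supported in the unit ball with ∫φ = 1, let u : ℝᵈ → ℝ be C¹, and define u_θ(x) = ∫ u(x - θR(x)y) φ(y) dy for θ > 0. Then for all x, |∇u_θ(x)| ≤ (1 + θL) · ∫ |∇u(x - θR(x)y)| φ(y) dy. -/
open MeasureTheory

theorem stmt_11 (d : ℕ) (R : EuclideanSpace ℝ (Fin d) → ℝ) (L : NNReal)
    (hRnn : ∀ x, 0 ≤ R x) (hRlip : LipschitzWith L R) (hRC1 : ContDiff ℝ 1 R)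
    (φ : EuclideanSpace ℝ (Fin d) → ℝ) (hφ : ContDiff ℝ 1 φ) (hφnn : ∀ y, 0 ≤ φ y)
    (hsupp : Function.support φ ⊆ Metric.closedBall 0 1) (hφ1 : (∫ y, φ y) = 1)
    (u : EuclideanSpace ℝ (Fin d) → ℝ) (hu : ContDiff ℝ 1 u)
    (θ : ℝ) (hθ : 0 < θ)
    (uθ : EuclideanSpace ℝ (Fin d) → ℝ)
    (huθ : uθ = fun x => ∫ y, u (x - (θ * R x) • y) * φ y) :
    ∀ x, ‖gradient uθ x‖ ≤
      (1 + θ * (L : ℝ)) * ∫ y, ‖gradient u (x - (θ * R x) • y)‖ * φ y := by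
  intro x₀
  -- basic facts
  have hudiff : Differentiable ℝ u := hu.differentiable one_ne_zero
  have hRdiff : Differentiable ℝ R := hRC1.differentiable one_ne_zero
  have hfderivu_cont : Continuous (fun z => fderiv ℝ u z) := hu.continuous_fderiv one_ne_zero
  have hRderiv_le : ∀ x : EuclideanSpace ℝ (Fin d), ‖fderiv ℝ R x‖ ≤ (L : ℝ) := fun x =>
    norm_fderiv_le_of_lipschitz ℝ hRlip
  have hφcont : Continuous φ := hφ.continuous
  have hφcs : HasCompactSupport φ :=
    HasCompactSupport.of_support_subset_isCompact (isCompact_closedBall 0 1) hsupp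
  -- the point map and derivative candidate
  set p : EuclideanSpace ℝ (Fin d) → EuclideanSpace ℝ (Fin d) → EuclideanSpace ℝ (Fin d) := fun x y => x - (θ * R x) • y with hp
  set A : EuclideanSpace ℝ (Fin d) → EuclideanSpace ℝ (Fin d) → (EuclideanSpace ℝ (Fin d) →L[ℝ] EuclideanSpace ℝ (Fin d)) := fun x y =>
    ContinuousLinearMap.id ℝ (EuclideanSpace ℝ (Fin d)) - ((θ • fderiv ℝ R x).smulRight y) with hA
  set F' : EuclideanSpace ℝ (Fin d) → EuclideanSpace ℝ (Fin d) → (EuclideanSpace ℝ (Fin d) →L[ℝ] ℝ) := fun x y =>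
    φ y • ((fderiv ℝ u (p x y)).comp (A x y)) with hF'
  have hpdiff : ∀ x y, HasFDerivAt (fun x => p x y) (A x y) x := by
    intro x y
    have h1 : HasFDerivAt (fun x => θ * R x) (θ • fderiv ℝ R x) x :=
      ((hRdiff x).hasFDerivAt).const_mul θ
    exact (hasFDerivAt_id x).sub (h1.smul_const y)
  have hFdiff : ∀ x y, HasFDerivAt (fun x => u (p x y) * φ y) (F' x y) x := by
    intro x y
    have h2 : HasFDerivAt (fun x => u (p x y))
        ((fderiv ℝ u (p x y)).comp (A x y)) x :=
      ((hudiff (p x y)).hasFDerivAt).comp x (hpdiff x y)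
    simpa [hF', smul_comm] using h2.mul_const (φ y)
  -- continuity of F' in y, for fixed x
  have hF'cont : ∀ x, Continuous (fun y => F' x y) := by
    intro x
    have hpc : Continuous (fun y : EuclideanSpace ℝ (Fin d) => p x y) := by
      simp only [hp]; fun_prop
    have hAc : Continuous (fun y => A x y) := by
      simp only [hA]
      exact continuous_const.sub
        ((ContinuousLinearMap.smulRightL ℝ (EuclideanSpace ℝ (Fin d)) (EuclideanSpace ℝ (Fin d)) (θ • fderiv ℝ R x)).continuous)
    exact hφcont.smul ((hfderivu_cont.comp hpc).clm_comp hAc)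
  have hpcont2 : ∀ x, Continuous (fun y : EuclideanSpace ℝ (Fin d) => u (p x y) * φ y) := by
    intro x
    have hpc : Continuous (fun y : EuclideanSpace ℝ (Fin d) => p x y) := by
      simp only [hp]; fun_prop
    exact ((hu.continuous).comp hpc).mul hφcont
  -- support facts
  have hF'supp : ∀ x, Function.support (fun y => F' x y) ⊆ Metric.closedBall 0 1 := by
    intro x y hy
    apply hsupp
    intro h0
    apply hy
    simp [hF', h0]
  -- norm bound for F'
  have hAnorm : ∀ x y, ‖y‖ ≤ 1 → ‖A x y‖ ≤ 1 + θ * (L : ℝ) := by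
    intro x y hy
    calc ‖A x y‖ ≤ ‖ContinuousLinearMap.id ℝ (EuclideanSpace ℝ (Fin d))‖ + ‖(θ • fderiv ℝ R x).smulRight y‖ :=
          norm_sub_le _ _
      _ ≤ 1 + θ * (L : ℝ) := by
          apply add_le_add ContinuousLinearMap.norm_id_le
          rw [ContinuousLinearMap.norm_smulRight_apply, norm_smul]
          calc ‖θ‖ * ‖fderiv ℝ R x‖ * ‖y‖ ≤ ‖θ‖ * ‖fderiv ℝ R x‖ * 1 := by
                apply mul_le_mul_of_nonneg_left hy (by positivity)
            _ ≤ θ * (L : ℝ) := by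
                rw [mul_one, Real.norm_eq_abs, abs_of_pos hθ]
                exact mul_le_mul_of_nonneg_left (hRderiv_le x) hθ.le
  have hF'le : ∀ x y, ‖F' x y‖ ≤ (1 + θ * (L : ℝ)) * (‖fderiv ℝ u (p x y)‖ * φ y) := by
    intro x y
    by_cases h0 : φ y = 0
    · simp [hF', h0]
    · have hy1 : ‖y‖ ≤ 1 := by
        have := hsupp (Function.mem_support.2 h0)
        simpa using this
      simp only [hF']
      rw [norm_smul (φ y) ((fderiv ℝ u (p x y)).comp (A x y)), Real.norm_eq_abs, abs_of_nonneg (hφnn y)]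
      calc φ y * ‖(fderiv ℝ u (p x y)).comp (A x y)‖
          ≤ φ y * (‖fderiv ℝ u (p x y)‖ * ‖A x y‖) :=
            mul_le_mul_of_nonneg_left (ContinuousLinearMap.opNorm_comp_le _ _) (hφnn y)
        _ ≤ φ y * (‖fderiv ℝ u (p x y)‖ * (1 + θ * (L : ℝ))) := by
            apply mul_le_mul_of_nonneg_left _ (hφnn y)
            exact mul_le_mul_of_nonneg_left (hAnorm x y hy1) (norm_nonneg _)
        _ = (1 + θ * (L : ℝ)) * (‖fderiv ℝ u (p x y)‖ * φ y) := by ring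
  -- uniform bound on ball x₀ 1
  set ρ : ℝ := 1 + θ * (R x₀ + (L : ℝ)) with hρ
  obtain ⟨C, hC⟩ : ∃ C, ∀ z ∈ Metric.closedBall x₀ ρ, ‖fderiv ℝ u z‖ ≤ C := by
    obtain ⟨C, hC⟩ := (isCompact_closedBall x₀ ρ).exists_bound_of_continuousOn
      (hfderivu_cont.continuousOn (s := Metric.closedBall x₀ ρ))
    exact ⟨C, hC⟩
  have hmem : ∀ x ∈ Metric.ball x₀ 1, ∀ y : EuclideanSpace ℝ (Fin d), ‖y‖ ≤ 1 →
      p x y ∈ Metric.closedBall x₀ ρ := by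
    intro x hx y hy
    have hxx : ‖x - x₀‖ ≤ 1 := le_of_lt (by simpa [dist_eq_norm] using hx)
    have hRx : R x ≤ R x₀ + (L : ℝ) := by
      have := hRlip.dist_le_mul x x₀
      have h2 : |R x - R x₀| ≤ (L : ℝ) * ‖x - x₀‖ := by
        simpa [Real.dist_eq, dist_eq_norm] using this
      have h3 : R x - R x₀ ≤ (L : ℝ) * 1 :=
        le_trans (le_trans (le_abs_self _) h2)
          (mul_le_mul_of_nonneg_left hxx L.coe_nonneg)
      linarith
    rw [Metric.mem_closedBall, dist_eq_norm]
    calc ‖p x y - x₀‖ = ‖(x - x₀) - (θ * R x) • y‖ := by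
          simp only [hp]; ring_nf; rw [sub_right_comm]
      _ ≤ ‖x - x₀‖ + ‖(θ * R x) • y‖ := norm_sub_le _ _
      _ ≤ 1 + θ * R x * 1 := by
          apply add_le_add hxx
          rw [norm_smul, Real.norm_eq_abs, abs_of_nonneg (mul_nonneg hθ.le (hRnn x))]
          exact mul_le_mul_of_nonneg_left hy (mul_nonneg hθ.le (hRnn x))
      _ ≤ ρ := by
          rw [mul_one, hρ]
          have := mul_le_mul_of_nonneg_left hRx hθ.le
          linarith
  -- the dominating function
  set bound : EuclideanSpace ℝ (Fin d) → ℝ := fun y => ((1 + θ * (L : ℝ)) * C) * φ y with hbound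
  have h_bound : ∀ᵐ y : EuclideanSpace ℝ (Fin d), ∀ x ∈ Metric.ball x₀ 1, ‖F' x y‖ ≤ bound y := by
    filter_upwards with y
    intro x hx
    by_cases h0 : φ y = 0
    · simp [hF', hbound, h0]
    · have hy1 : ‖y‖ ≤ 1 := by
        have := hsupp (Function.mem_support.2 h0)
        simpa using this
      refine (hF'le x y).trans ?_
      rw [hbound]
      have hCu : ‖fderiv ℝ u (p x y)‖ ≤ C := hC _ (hmem x hx y hy1)
      have h1θL : (0:ℝ) ≤ 1 + θ * (L : ℝ) := by positivity
      calc (1 + θ * (L:ℝ)) * (‖fderiv ℝ u (p x y)‖ * φ y)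
          ≤ (1 + θ * (L:ℝ)) * (C * φ y) := by
            apply mul_le_mul_of_nonneg_left _ h1θL
            exact mul_le_mul_of_nonneg_right hCu (hφnn y)
        _ = ((1 + θ * (L:ℝ)) * C) * φ y := by ring
  have hbound_int : Integrable bound := by
    apply Integrable.const_mul
    exact hφcont.integrable_of_hasCompactSupport hφcs
  have hF'int : Integrable (fun y => F' x₀ y) := by
    apply (hF'cont x₀).integrable_of_hasCompactSupport
    exact HasCompactSupport.of_support_subset_isCompact (isCompact_closedBall 0 1) (hF'supp x₀)
  have hFint : Integrable (fun y => u (p x₀ y) * φ y) := by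
    apply (hpcont2 x₀).integrable_of_hasCompactSupport
    apply HasCompactSupport.of_support_subset_isCompact (isCompact_closedBall 0 1)
    intro y hy
    apply hsupp
    intro h0
    apply hy
    simp [h0]
  -- differentiation under the integral sign
  have hderiv : HasFDerivAt (fun x => ∫ y, u (p x y) * φ y) (∫ y, F' x₀ y) x₀ := by
    apply hasFDerivAt_integral_of_dominated_of_fderiv_le (bound := bound)
      (F' := fun x y => F' x y) (Metric.ball_mem_nhds x₀ one_pos)
    · filter_upwards with x
      exact (hpcont2 x).aestronglyMeasurable
    · exact hFint
    · exact (hF'cont x₀).aestronglyMeasurable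
    · exact h_bound
    · exact hbound_int
    · filter_upwards with y
      intro x hx
      exact hFdiff x y
  have huθderiv : HasFDerivAt uθ (∫ y, F' x₀ y) x₀ := by
    rw [huθ]; exact hderiv
  have hgradnorm : ∀ (f : EuclideanSpace ℝ (Fin d) → ℝ) (x : EuclideanSpace ℝ (Fin d)), ‖gradient f x‖ = ‖fderiv ℝ f x‖ := by
    intro f x
    rw [gradient]
    exact LinearIsometryEquiv.norm_map (InnerProductSpace.toDual ℝ (EuclideanSpace ℝ (Fin d))).symm _
  rw [hgradnorm, huθderiv.fderiv]
  -- the RHS integrand integrability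
  have hrhsint : Integrable (fun y => ‖fderiv ℝ u (p x₀ y)‖ * φ y) := by
    apply Continuous.integrable_of_hasCompactSupport
    · have hpc : Continuous (fun y : EuclideanSpace ℝ (Fin d) => p x₀ y) := by
        simp only [hp]; fun_prop
      exact ((hfderivu_cont.comp hpc).norm).mul hφcont
    · apply HasCompactSupport.of_support_subset_isCompact (isCompact_closedBall 0 1)
      intro y hy
      apply hsupp
      intro h0
      apply hy
      simp [h0]
  calc ‖∫ y, F' x₀ y‖ ≤ ∫ y, ‖F' x₀ y‖ := norm_integral_le_integral_norm _
    _ ≤ ∫ y, (1 + θ * (L:ℝ)) * (‖fderiv ℝ u (p x₀ y)‖ * φ y) := by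
        apply integral_mono hF'int.norm (hrhsint.const_mul _)
        intro y
        exact hF'le x₀ y
    _ = (1 + θ * (L:ℝ)) * ∫ y, ‖fderiv ℝ u (p x₀ y)‖ * φ y := integral_const_mul _ _
    _ = (1 + θ * (L:ℝ)) * ∫ y, ‖gradient u (x₀ - (θ * R x₀) • y)‖ * φ y := by
        congr 1
        apply integral_congr_ae
        filter_upwards with y
        rw [hgradnorm]
end

section
/- Let ρ, R : ℝᵈ → ℝ≥0 with R L-Lipschitz and C¹, θL ≤ 1/2, and suppose the pointwise bound ρ(x)|u_θ(x) - u(x)| ≤ 4θ ∫₀¹ (ρR|∇u|)_{tθ}(x) dt holds for all x, with ρR|∇u| integrable. Then ∫ ρ|u_θ - u| ≤ 8θ ∫ ρ R |∇u|. -/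
open MeasureTheory
open scoped ENNReal

lemma myOfReal_integral_le {α : Type*} [MeasurableSpace α] (μ : Measure α) (g : α → ℝ)
    (hg : ∀ a, 0 ≤ g a) :
    ENNReal.ofReal (∫ a, g a ∂μ) ≤ ∫⁻ a, ENNReal.ofReal (g a) ∂μ := by
  by_cases hgi : Integrable g μ
  · exact le_of_eq (ofReal_integral_eq_lintegral_ofReal hgi (Filter.Eventually.of_forall hg))
  · rw [integral_undef hgi]; simp

set_option maxHeartbeats 1000000 in

lemma myKey {d : ℕ} (R : EuclideanSpace ℝ (Fin d) → ℝ) (L : NNReal)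
    (hRlip : LipschitzWith L R) (hRC1 : ContDiff ℝ 1 R)
    (s : ℝ) (hs : 0 ≤ s) (hsL : s * (L : ℝ) ≤ 1 / 2)
    (y : EuclideanSpace ℝ (Fin d)) (hy : ‖y‖ ≤ 1)
    (F : EuclideanSpace ℝ (Fin d) → ℝ≥0∞) :
    ∫⁻ x, F (x - (s * R x) • y) ≤ 2 * ∫⁻ x, F x := by
  have hdet : ∀ ℓ y', ContinuousLinearMap.det
      (ContinuousLinearMap.id ℝ (EuclideanSpace ℝ (Fin d)) - ContinuousLinearMap.smulRight ℓ y')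
      = 1 - ℓ y' := fun ℓ y' => by
    classical
    set b : Module.Basis (Fin d) ℝ (EuclideanSpace ℝ (Fin d)) :=
      (EuclideanSpace.basisFun (Fin d) ℝ).toBasis
    rw [ContinuousLinearMap.det, ← LinearMap.det_toMatrix b]
    have hM : LinearMap.toMatrix b b
        ((ContinuousLinearMap.id ℝ (EuclideanSpace ℝ (Fin d)) - ℓ.smulRight y' : _ →L[ℝ] _) :
          _ →ₗ[ℝ] _)
        = 1 + Matrix.replicateCol (Fin 1) (fun i => -(b.repr y' i)) *
            Matrix.replicateRow (Fin 1) (fun j => ℓ (b j)) := by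
      ext i j
      simp only [LinearMap.toMatrix_apply, ContinuousLinearMap.coe_coe,
        ContinuousLinearMap.sub_apply, ContinuousLinearMap.coe_id', id_eq,
        ContinuousLinearMap.smulRight_apply, map_sub, _root_.map_smul, Matrix.add_apply,
        Matrix.one_apply, Matrix.mul_apply, Matrix.replicateCol_apply, Matrix.replicateRow_apply,
        Finset.univ_unique, Finset.sum_singleton, Finsupp.coe_sub, Finsupp.coe_smul,
        Pi.sub_apply, Pi.smul_apply, smul_eq_mul, Module.Basis.repr_self, Finsupp.single_apply]
      rcases eq_or_ne i j with h | h <;> simp [h, eq_comm] <;> ring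
    rw [hM]
    refine (Matrix.det_one_add_replicateCol_mul_replicateRow (ι := Fin 1) _ _).trans ?_
    have hy' : ℓ y' = ∑ j, b.repr y' j * ℓ (b j) := by
      conv_lhs => rw [← b.sum_repr y']
      simp only [map_sum, _root_.map_smul, smul_eq_mul]
    rw [hy']
    simp [dotProduct, mul_neg, mul_comm, Finset.sum_neg_distrib, sub_eq_add_neg]
  set T : EuclideanSpace ℝ (Fin d) → EuclideanSpace ℝ (Fin d) :=
    fun x => x - (s * R x) • y with hT
  have hR' : Differentiable ℝ R := hRC1.differentiable one_ne_zero
  set A : EuclideanSpace ℝ (Fin d) → EuclideanSpace ℝ (Fin d) →L[ℝ] EuclideanSpace ℝ (Fin d) :=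
    fun x => ContinuousLinearMap.id ℝ (EuclideanSpace ℝ (Fin d)) -
      ContinuousLinearMap.smulRight (s • fderiv ℝ R x) y with hA
  have hder : ∀ x, HasFDerivAt T (A x) x := by
    intro x
    have h1 : HasFDerivAt (fun x => s * R x) (s • fderiv ℝ R x) x :=
      ((hR' x).hasFDerivAt).const_mul s
    exact (hasFDerivAt_id x).sub (h1.smul_const y)
  have hℓ : ∀ x, |(s • fderiv ℝ R x) y| ≤ s * (L : ℝ) := by
    intro x
    have h0 : ‖fderiv ℝ R x‖ ≤ (L : ℝ) := norm_fderiv_le_of_lipschitz ℝ hRlip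
    have h1 : |fderiv ℝ R x y| ≤ ‖fderiv ℝ R x‖ * ‖y‖ := (fderiv ℝ R x).le_opNorm y
    have h2 : ‖fderiv ℝ R x‖ * ‖y‖ ≤ (L : ℝ) * 1 :=
      mul_le_mul h0 hy (norm_nonneg _) L.coe_nonneg
    simp only [ContinuousLinearMap.smul_apply, smul_eq_mul, abs_mul, abs_of_nonneg hs]
    calc s * |fderiv ℝ R x y| ≤ s * ((L : ℝ) * 1) :=
          mul_le_mul_of_nonneg_left (h1.trans h2) hs
      _ = s * (L : ℝ) := by ring
  have hdetA : ∀ x, (1 : ℝ) / 2 ≤ (A x).det := by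
    intro x
    rw [hA]
    simp only
    rw [hdet]
    have := hℓ x
    have h2 := abs_le.1 this
    linarith [hsL]
  have hinj : Function.Injective T := by
    intro a b hab
    simp only [hT] at hab
    have h1 : a - b = (s * R a - s * R b) • y := by
      rw [sub_smul]
      exact sub_eq_sub_iff_sub_eq_sub.2 hab
    have h2 : ‖a - b‖ ≤ (1 / 2) * ‖a - b‖ := by
      calc ‖a - b‖ = |s * R a - s * R b| * ‖y‖ := by rw [h1, norm_smul, Real.norm_eq_abs]
        _ ≤ |s * R a - s * R b| * 1 := mul_le_mul_of_nonneg_left hy (abs_nonneg _)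
        _ = s * |R a - R b| := by rw [mul_one, ← mul_sub, abs_mul, abs_of_nonneg hs]
        _ ≤ s * ((L : ℝ) * ‖a - b‖) := by
            apply mul_le_mul_of_nonneg_left _ hs
            have := hRlip.dist_le_mul a b
            rwa [Real.dist_eq, dist_eq_norm] at this
        _ ≤ (1 / 2) * ‖a - b‖ := by
            rw [← mul_assoc]
            exact mul_le_mul_of_nonneg_right hsL (norm_nonneg _)
    have h3 : ‖a - b‖ = 0 := by nlinarith [norm_nonneg (a - b)]
    have := norm_eq_zero.1 h3
    exact sub_eq_zero.1 this
  have himg := lintegral_image_eq_lintegral_abs_det_fderiv_mul volume MeasurableSet.univ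
    (fun x _ => (hder x).hasFDerivWithinAt) (hinj.injOn) F
  rw [Measure.restrict_univ] at himg
  have hhalf : ∀ x, (2 : ℝ≥0∞)⁻¹ ≤ ENNReal.ofReal |(A x).det| := by
    intro x
    have h1 : (1 : ℝ) / 2 ≤ |(A x).det| := le_trans (hdetA x) (le_abs_self _)
    calc (2 : ℝ≥0∞)⁻¹ = ENNReal.ofReal (1 / 2) := by
          rw [ENNReal.ofReal_div_of_pos (by norm_num)]
          simp
      _ ≤ ENNReal.ofReal |(A x).det| := ENNReal.ofReal_le_ofReal h1
  have e1 : ∫⁻ x, (2 : ℝ≥0∞)⁻¹ * F (T x) ≤ ∫⁻ x, ENNReal.ofReal |(A x).det| * F (T x) :=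
    lintegral_mono fun x => mul_le_mul_left (hhalf x) _
  have e2 : ∫⁻ x in T '' Set.univ, F x ≤ ∫⁻ x, F x := setLIntegral_le_lintegral _ _
  have e3 : (2 : ℝ≥0∞)⁻¹ * ∫⁻ x, F (T x) ≤ ∫⁻ x, F x := by
    rw [← lintegral_const_mul' _ _ (by norm_num : (2 : ℝ≥0∞)⁻¹ ≠ ⊤)]
    exact e1.trans (himg ▸ e2)
  calc ∫⁻ x, F (T x) = 2 * ((2 : ℝ≥0∞)⁻¹ * ∫⁻ x, F (T x)) := by
        rw [← mul_assoc, ENNReal.mul_inv_cancel (by norm_num) (by norm_num), one_mul]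
    _ ≤ 2 * ∫⁻ x, F x := mul_le_mul_right e3 _

set_option maxHeartbeats 1000000 in
theorem stmt_14 (d : ℕ) (ρ R : EuclideanSpace ℝ (Fin d) → ℝ)
    (hρnn : ∀ x, 0 ≤ ρ x) (hRnn : ∀ x, 0 ≤ R x)
    (L : NNReal) (hRlip : LipschitzWith L R) (hRC1 : ContDiff ℝ 1 R)
    (θ : ℝ) (hθ : 0 < θ) (hθL : θ * (L : ℝ) ≤ 1 / 2)
    (u : EuclideanSpace ℝ (Fin d) → ℝ) (hu : ContDiff ℝ 1 u)
    (φ : EuclideanSpace ℝ (Fin d) → ℝ) (hφnn : ∀ y, 0 ≤ φ y)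
    (hsupp : Function.support φ ⊆ Metric.closedBall 0 1) (hφ1 : (∫ y, φ y) = 1)
    (uθ : EuclideanSpace ℝ (Fin d) → ℝ)
    (huθ : uθ = fun x => ∫ y, u (x - (θ * R x) • y) * φ y)
    (hpt : ∀ x, ρ x * |uθ x - u x| ≤
      4 * θ * ∫ t in (0:ℝ)..1, ∫ y,
        ρ (x - (t * θ * R x) • y) * R (x - (t * θ * R x) • y) *
          ‖gradient u (x - (t * θ * R x) • y)‖ * φ y)
    (hint : Integrable (fun x => ρ x * R x * ‖gradient u x‖)) :
    ∫ x, ρ x * |uθ x - u x| ≤ 8 * θ * ∫ x, ρ x * R x * ‖gradient u x‖ := by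
  classical
  have hfnn : ∀ x, 0 ≤ ρ x * R x * ‖gradient u x‖ := fun x =>
    mul_nonneg (mul_nonneg (hρnn x) (hRnn x)) (norm_nonneg _)
  have hInt : (0:ℝ) ≤ ∫ x, ρ x * R x * ‖gradient u x‖ := integral_nonneg hfnn
  have hRHSnn : 0 ≤ 8 * θ * ∫ x, ρ x * R x * ‖gradient u x‖ := by positivity
  by_cases hI : Integrable (fun x => ρ x * |uθ x - u x|) volume
  swap
  · rw [integral_undef hI]; exact hRHSnn
  obtain ⟨f', hf'meas, hf'ae⟩ : ∃ f', Measurable f' ∧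
      (fun x => ρ x * R x * ‖gradient u x‖) =ᵐ[volume] f' :=
    ⟨hint.1.aemeasurable.mk _, hint.1.aemeasurable.measurable_mk,
      hint.1.aemeasurable.ae_eq_mk⟩
  have hφint : Integrable φ := by
    by_contra h; rw [integral_undef h] at hφ1; norm_num at hφ1
  obtain ⟨φ', hφ'meas, hφ'ae⟩ : ∃ φ', Measurable φ' ∧ φ =ᵐ[volume] φ' :=
    ⟨hφint.1.aemeasurable.mk φ, hφint.1.aemeasurable.measurable_mk,
      hφint.1.aemeasurable.ae_eq_mk⟩
  set F : EuclideanSpace ℝ (Fin d) → ℝ≥0∞ := fun x => ENNReal.ofReal (f' x) with hFdef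
  have hFmeas : Measurable F := ENNReal.measurable_ofReal.comp hf'meas
  have hFint : ∫⁻ x, F x = ENNReal.ofReal (∫ x, ρ x * R x * ‖gradient u x‖) := by
    have h1 : ∫⁻ x, F x = ∫⁻ x, ENNReal.ofReal (ρ x * R x * ‖gradient u x‖) := by
      apply lintegral_congr_ae
      filter_upwards [hf'ae] with x hx
      have hx' : ρ x * R x * ‖gradient u x‖ = f' x := hx
      rw [hx']
    rw [h1, ← ofReal_integral_eq_lintegral_ofReal hint (Filter.Eventually.of_forall hfnn)]
  have hFtop : ∫⁻ x, F x ≠ ⊤ := by rw [hFint]; exact ENNReal.ofReal_ne_top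
  set Φ : EuclideanSpace ℝ (Fin d) → ℝ → EuclideanSpace ℝ (Fin d) → ℝ≥0∞ :=
    fun x t y => F (x - (t * θ * R x) • y) * ENNReal.ofReal (φ' y) with hΦdef
  have hRcont : Continuous R := hRC1.continuous
  have hbig : Measurable (fun q : (EuclideanSpace ℝ (Fin d) × ℝ) × EuclideanSpace ℝ (Fin d) =>
      Φ q.1.1 q.1.2 q.2) := by
    refine Measurable.mul (f := fun q : (EuclideanSpace ℝ (Fin d) × ℝ) × EuclideanSpace ℝ (Fin d) => F (q.1.1 - (q.1.2 * θ * R q.1.1) • q.2))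
      (g := fun q : (EuclideanSpace ℝ (Fin d) × ℝ) × EuclideanSpace ℝ (Fin d) => ENNReal.ofReal (φ' q.2)) ?_ ?_
    · apply hFmeas.comp
      apply Continuous.measurable
      fun_prop
    · exact ENNReal.measurable_ofReal.comp (hφ'meas.comp measurable_snd)
  have hφ'lint : ∫⁻ y, ENNReal.ofReal (φ' y) = 1 := by
    have h0 : ∫⁻ y, ENNReal.ofReal (φ' y) = ∫⁻ y, ENNReal.ofReal (φ y) := by
      apply lintegral_congr_ae
      filter_upwards [hφ'ae] with y hy
      rw [hy]
    rw [h0, ← ofReal_integral_eq_lintegral_ofReal hφint (Filter.Eventually.of_forall hφnn), hφ1]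
    simp
  -- core bound
  have core : ∫⁻ x, ∫⁻ t in Set.Ioc (0:ℝ) 1, ∫⁻ y, Φ x t y ≤ 2 * ∫⁻ x, F x := by
    have m1 : Measurable (fun p : EuclideanSpace ℝ (Fin d) × ℝ => ∫⁻ y, Φ p.1 p.2 y) := by
      exact hbig.lintegral_prod_right'
    have swap1 : ∫⁻ x, ∫⁻ t in Set.Ioc (0:ℝ) 1, ∫⁻ y, Φ x t y
        = ∫⁻ t in Set.Ioc (0:ℝ) 1, ∫⁻ x, ∫⁻ y, Φ x t y :=
      lintegral_lintegral_swap m1.aemeasurable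
    rw [swap1]
    have ht : ∀ t ∈ Set.Ioc (0:ℝ) 1, (∫⁻ x, ∫⁻ y, Φ x t y) ≤ 2 * ∫⁻ x, F x := by
      intro t ht
      have m2 : Measurable (fun p : EuclideanSpace ℝ (Fin d) × EuclideanSpace ℝ (Fin d) =>
          Φ p.1 t p.2) := by
        have hemb : Measurable (fun p : EuclideanSpace ℝ (Fin d) × EuclideanSpace ℝ (Fin d) =>
            (((p.1, t), p.2) : (EuclideanSpace ℝ (Fin d) × ℝ) × EuclideanSpace ℝ (Fin d))) :=
          (measurable_fst.prodMk measurable_const).prodMk measurable_snd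
        exact hbig.comp hemb
      have swap2 : ∫⁻ x, ∫⁻ y, Φ x t y = ∫⁻ y, ∫⁻ x, Φ x t y :=
        lintegral_lintegral_swap m2.aemeasurable
      rw [swap2]
      have hs0 : 0 ≤ t * θ := mul_nonneg ht.1.le hθ.le
      have hsL : t * θ * (L : ℝ) ≤ 1 / 2 := by
        have hθL' : 0 ≤ θ * (L : ℝ) := mul_nonneg hθ.le L.coe_nonneg
        nlinarith [ht.1.le, ht.2, L.coe_nonneg]
      have step : ∀ᵐ y, (∫⁻ x, Φ x t y) ≤ ENNReal.ofReal (φ' y) * (2 * ∫⁻ x, F x) := by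
        filter_upwards [hφ'ae] with y hy
        have hpull : ∫⁻ x, Φ x t y
            = (∫⁻ x, F (x - (t * θ * R x) • y)) * ENNReal.ofReal (φ' y) :=
          lintegral_mul_const' _ _ ENNReal.ofReal_ne_top
        rw [hpull, mul_comm]
        by_cases hy1 : ‖y‖ ≤ 1
        · exact mul_le_mul_right (myKey R L hRlip hRC1 (t * θ) hs0 hsL y hy1 F) _
        · have hφy : φ y = 0 := by
            by_contra h
            have hy2 : y ∈ Metric.closedBall (0 : EuclideanSpace ℝ (Fin d)) 1 :=
              hsupp (Function.mem_support.2 h)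
            rw [Metric.mem_closedBall, dist_zero_right] at hy2
            exact hy1 hy2
          rw [← hy, hφy]
          simp
      calc ∫⁻ y, ∫⁻ x, Φ x t y
          ≤ ∫⁻ y, ENNReal.ofReal (φ' y) * (2 * ∫⁻ x, F x) := lintegral_mono_ae step
        _ = (∫⁻ y, ENNReal.ofReal (φ' y)) * (2 * ∫⁻ x, F x) := by
            have h2top : (2 * ∫⁻ x, F x) ≠ ⊤ := ENNReal.mul_ne_top (by norm_num) hFtop
            exact lintegral_mul_const' _ _ h2top
        _ = 2 * ∫⁻ x, F x := by rw [hφ'lint, one_mul]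
    calc ∫⁻ t in Set.Ioc (0:ℝ) 1, ∫⁻ x, ∫⁻ y, Φ x t y
        ≤ ∫⁻ t in Set.Ioc (0:ℝ) 1, (2 * ∫⁻ x, F x) :=
          lintegral_mono_ae ((ae_restrict_mem measurableSet_Ioc).mono ht)
      _ = 2 * ∫⁻ x, F x := by
          rw [setLIntegral_const]
          simp [Real.volume_Ioc]
  -- pointwise a.e. bound
  have h4θ : (0:ℝ) ≤ 4 * θ := by positivity
  have hptae : ∀ᵐ x, ENNReal.ofReal (ρ x * |uθ x - u x|) ≤
      ENNReal.ofReal (4 * θ) * ∫⁻ t in Set.Ioc (0:ℝ) 1, ∫⁻ y, Φ x t y := by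
    filter_upwards [hf'ae] with x hx
    calc ENNReal.ofReal (ρ x * |uθ x - u x|)
        ≤ ENNReal.ofReal (4 * θ * ∫ t in (0:ℝ)..1, ∫ y,
            ρ (x - (t * θ * R x) • y) * R (x - (t * θ * R x) • y) *
              ‖gradient u (x - (t * θ * R x) • y)‖ * φ y) :=
          ENNReal.ofReal_le_ofReal (hpt x)
      _ = ENNReal.ofReal (4 * θ) * ENNReal.ofReal (∫ t in (0:ℝ)..1, ∫ y,
            ρ (x - (t * θ * R x) • y) * R (x - (t * θ * R x) • y) *
              ‖gradient u (x - (t * θ * R x) • y)‖ * φ y) := ENNReal.ofReal_mul h4θ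
      _ ≤ ENNReal.ofReal (4 * θ) * ∫⁻ t in Set.Ioc (0:ℝ) 1, ∫⁻ y, Φ x t y := by
          apply mul_le_mul_right
          rw [intervalIntegral.integral_of_le (by norm_num : (0:ℝ) ≤ 1)]
          refine le_trans (myOfReal_integral_le _ _ fun t =>
            integral_nonneg fun y => mul_nonneg (hfnn _) (hφnn y)) ?_
          refine lintegral_mono fun t => ?_
          refine le_trans (myOfReal_integral_le _ _ fun y =>
            mul_nonneg (hfnn _) (hφnn y)) ?_
          refine le_of_eq (lintegral_congr_ae ?_)
          by_cases hc : t * θ * R x = 0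
          · filter_upwards [hφ'ae] with y hy
            show ENNReal.ofReal (ρ (x - (t * θ * R x) • y) * R (x - (t * θ * R x) • y) *
              ‖gradient u (x - (t * θ * R x) • y)‖ * φ y)
              = F (x - (t * θ * R x) • y) * ENNReal.ofReal (φ' y)
            rw [hc]
            simp only [zero_smul, sub_zero]
            have hx' : ρ x * R x * ‖gradient u x‖ = f' x := hx
            rw [ENNReal.ofReal_mul (hfnn x), hx', hy]
          · have hqmp : Measure.QuasiMeasurePreserving
                (fun y : EuclideanSpace ℝ (Fin d) => x - (t * θ * R x) • y) volume volume := by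
              have h1 : Measure.QuasiMeasurePreserving
                  (fun z : EuclideanSpace ℝ (Fin d) => x - z) volume volume :=
                (Measure.measurePreserving_sub_left volume x).quasiMeasurePreserving
              have h2 : Measure.QuasiMeasurePreserving
                  (fun y : EuclideanSpace ℝ (Fin d) => (t * θ * R x) • y) volume volume :=
                Measure.quasiMeasurePreserving_smul volume hc
              exact h1.comp h2
            have hnull : (fun y => (fun z => ρ z * R z * ‖gradient u z‖)
                  ((fun y : EuclideanSpace ℝ (Fin d) => x - (t * θ * R x) • y) y))
                =ᵐ[volume] (fun y => f'
                  ((fun y : EuclideanSpace ℝ (Fin d) => x - (t * θ * R x) • y) y)) :=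
              hqmp.ae_eq_comp hf'ae
            filter_upwards [hnull, hφ'ae] with y h1 h2
            show ENNReal.ofReal (ρ (x - (t * θ * R x) • y) * R (x - (t * θ * R x) • y) *
              ‖gradient u (x - (t * θ * R x) • y)‖ * φ y)
              = F (x - (t * θ * R x) • y) * ENNReal.ofReal (φ' y)
            have h1' : ρ (x - (t * θ * R x) • y) * R (x - (t * θ * R x) • y) *
                ‖gradient u (x - (t * θ * R x) • y)‖ = f' (x - (t * θ * R x) • y) := h1
            rw [ENNReal.ofReal_mul (hfnn _), h1', h2]
  -- assemble
  have hmain : ∫⁻ x, ENNReal.ofReal (ρ x * |uθ x - u x|)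
      ≤ ENNReal.ofReal (8 * θ * ∫ x, ρ x * R x * ‖gradient u x‖) := by
    calc ∫⁻ x, ENNReal.ofReal (ρ x * |uθ x - u x|)
        ≤ ∫⁻ x, ENNReal.ofReal (4 * θ) * ∫⁻ t in Set.Ioc (0:ℝ) 1, ∫⁻ y, Φ x t y :=
          lintegral_mono_ae hptae
      _ = ENNReal.ofReal (4 * θ) * ∫⁻ x, ∫⁻ t in Set.Ioc (0:ℝ) 1, ∫⁻ y, Φ x t y :=
          lintegral_const_mul' _ _ ENNReal.ofReal_ne_top
      _ ≤ ENNReal.ofReal (4 * θ) * (2 * ∫⁻ x, F x) := mul_le_mul_right core _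
      _ = ENNReal.ofReal (8 * θ * ∫ x, ρ x * R x * ‖gradient u x‖) := by
          rw [hFint]
          have h2I : (2:ℝ≥0∞) * ENNReal.ofReal (∫ x, ρ x * R x * ‖gradient u x‖)
              = ENNReal.ofReal (2 * ∫ x, ρ x * R x * ‖gradient u x‖) := by
            rw [ENNReal.ofReal_mul (by norm_num : (0:ℝ) ≤ 2)]
            simp
          rw [h2I, ← ENNReal.ofReal_mul h4θ]
          congr 1
          ring
  rw [integral_eq_lintegral_of_nonneg_ae
    (Filter.Eventually.of_forall fun x => mul_nonneg (hρnn x) (abs_nonneg _)) hI.1]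
  exact ENNReal.toReal_le_of_le_ofReal hRHSnn hmain
end
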